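/- Let 0 < α ≤ 1, let s be a positive integer with s ≤ n, and let k > 0 be such that ks is a positive integer and a(s,ks;α) = (√(ks) − α)/(√s + α) > 1. Let b = Ax + z with ‖z‖₁ ≤ η₁. Suppose A ∈ ℝ^{m×n} has (ℓ₂,ℓ₁)-RIP constants satisfying δ_{ks}^{ub} + a(s,ks;α)·δ_{(k+1)s}^{lb} < a(s,ks;α) − 1, and let x̂ satisfy ‖b − A x̂‖₁ ≤ η₁ and ‖x̂‖₁ − α‖x̂‖₂ ≤ ‖x‖₁ − α‖x‖₂ (in particular, x̂ may be any minimizer of ‖·‖₁ − α‖·‖₂ subject to ‖b − Az‖₁ ≤ η₁). Then ‖x̂ − x‖₂ ≤ [2(2√k + 1)√s / ((2√(ks) − α)·ρ_{ks})]·η₁ + [√s/(2√(ks) − α)]·[(2√k + 1)(1 + δ_{ks}^{ub})√s/(ρ_{ks}(√(ks) − α)) + 1]·(2‖x_{-max(s)}‖₁/√s), where ρ_{ks} = 1 − δ_{(k+1)s}^{lb} − (1 + δ_{ks}^{ub})/a(s,ks;α). -/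

import Mathlib

open Finset

/-- The ℓ₁ norm of a vector in `ℝⁿ`. -/
noncomputable def l1norm {n : ℕ} (x : Fin n → ℝ) : ℝ := ∑ i, |x i|

/-- The ℓ₂ norm of a vector in `ℝⁿ`. -/
noncomputable def l2norm {n : ℕ} (x : Fin n → ℝ) : ℝ := Real.sqrt (∑ i, (x i) ^ 2)

/-- The restriction `x_S` of a vector `x` to an index set `S` (equal to `x` on `S`, zero
outside `S`). -/
def restr {n : ℕ} (x : Fin n → ℝ) (S : Finset (Fin n)) : Fin n → ℝ :=
  fun i => if i ∈ S then x i else 0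

/-- `T` is an index set of the `s` largest-magnitude entries of `x` among the indices in `S`. -/
def IsMaxIdxOn {n : ℕ} (x : Fin n → ℝ) (s : ℕ) (T S : Finset (Fin n)) : Prop :=
  T ⊆ S ∧ T.card = s ∧ ∀ i ∈ T, ∀ j ∈ S \ T, |x j| ≤ |x i|

/-- `T` is an index set of the `s` largest-magnitude entries of `x`. -/
def IsMaxIdx {n : ℕ} (x : Fin n → ℝ) (s : ℕ) (T : Finset (Fin n)) : Prop :=
  IsMaxIdxOn x s T Finset.univ

/-- A vector is `r`-sparse: it has at most `r` nonzero entries. -/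
def Sparse {n : ℕ} (r : ℕ) (v : Fin n → ℝ) : Prop :=
  ∃ S : Finset (Fin n), S.card ≤ r ∧ ∀ i ∉ S, v i = 0

namespace Stmt7Aux

lemma l1norm_nonneg {n : ℕ} (x : Fin n → ℝ) : 0 ≤ l1norm x :=
  Finset.sum_nonneg fun _ _ => abs_nonneg _

lemma l2norm_nonneg {n : ℕ} (x : Fin n → ℝ) : 0 ≤ l2norm x := Real.sqrt_nonneg _

lemma l2norm_sq {n : ℕ} (x : Fin n → ℝ) : (l2norm x) ^ 2 = ∑ i, (x i) ^ 2 :=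
  Real.sq_sqrt (Finset.sum_nonneg fun _ _ => sq_nonneg _)

lemma l1norm_add_le {n : ℕ} (x y : Fin n → ℝ) : l1norm (x + y) ≤ l1norm x + l1norm y := by
  rw [l1norm, l1norm, l1norm, ← Finset.sum_add_distrib]
  exact Finset.sum_le_sum fun i _ => abs_add_le _ _

lemma sum_mul_le_l2 {n : ℕ} (x y : Fin n → ℝ) : ∑ i, x i * y i ≤ l2norm x * l2norm y := by
  have h := Finset.sum_mul_sq_le_sq_mul_sq Finset.univ x y
  have h2 : (l2norm x * l2norm y) ^ 2 = (∑ i, (x i) ^ 2) * ∑ i, (y i) ^ 2 := by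
    rw [mul_pow, l2norm_sq, l2norm_sq]
  nlinarith [l2norm_nonneg x, l2norm_nonneg y, le_abs_self (∑ i, x i * y i),
    sq_abs (∑ i, x i * y i), mul_nonneg (l2norm_nonneg x) (l2norm_nonneg y)]

lemma l2norm_add_le {n : ℕ} (x y : Fin n → ℝ) : l2norm (x + y) ≤ l2norm x + l2norm y := by
  have h1 : (l2norm (x + y)) ^ 2 ≤ (l2norm x + l2norm y) ^ 2 := by
    rw [l2norm_sq]
    have : ∀ i, ((x + y) i) ^ 2 = x i ^ 2 + 2 * (x i * y i) + y i ^ 2 := by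
      intro i; simp [Pi.add_apply]; ring
    simp_rw [this]
    rw [Finset.sum_add_distrib, Finset.sum_add_distrib, ← Finset.mul_sum]
    have := sum_mul_le_l2 x y
    have hx := l2norm_sq x; have hy := l2norm_sq y
    nlinarith
  nlinarith [l2norm_nonneg (x + y), add_nonneg (l2norm_nonneg x) (l2norm_nonneg y)]

lemma le_of_sq_le_sq {a b : ℝ} (hb : 0 ≤ b) (h : a ^ 2 ≤ b ^ 2) (ha : 0 ≤ a) : a ≤ b := by
  nlinarith


lemma l1norm_restr {n : ℕ} (x : Fin n → ℝ) (S : Finset (Fin n)) :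
    l1norm (restr x S) = ∑ i ∈ S, |x i| := by
  rw [l1norm]
  rw [← Finset.sum_subset (Finset.subset_univ S) (fun i _ hi => by simp [restr, hi])]
  exact Finset.sum_congr rfl fun i hi => by simp [restr, hi]

lemma sum_sq_restr {n : ℕ} (x : Fin n → ℝ) (S : Finset (Fin n)) :
    ∑ i, (restr x S i) ^ 2 = ∑ i ∈ S, (x i) ^ 2 := by
  rw [← Finset.sum_subset (Finset.subset_univ S) (fun i _ hi => by simp [restr, hi])]
  exact Finset.sum_congr rfl fun i hi => by simp [restr, hi]

lemma restr_add_sdiff {n : ℕ} (x : Fin n → ℝ) {B S : Finset (Fin n)} (hBS : B ⊆ S) :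
    restr x S = restr x B + restr x (S \ B) := by
  funext i
  by_cases hB : i ∈ B
  · simp [restr, hB, hBS hB, Finset.mem_sdiff]
  · by_cases hS : i ∈ S <;> simp [restr, hB, hS, Finset.mem_sdiff]

lemma l1norm_restr_add_sdiff {n : ℕ} (x : Fin n → ℝ) {B S : Finset (Fin n)} (hBS : B ⊆ S) :
    l1norm (restr x S) = l1norm (restr x B) + l1norm (restr x (S \ B)) := by
  rw [l1norm_restr, l1norm_restr, l1norm_restr, add_comm, Finset.sum_sdiff hBS]

lemma l2norm_restr_mono {n : ℕ} (x : Fin n → ℝ) {T S : Finset (Fin n)} (hTS : T ⊆ S) :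
    l2norm (restr x T) ≤ l2norm (restr x S) := by
  apply Real.sqrt_le_sqrt
  rw [sum_sq_restr, sum_sq_restr]
  exact Finset.sum_le_sum_of_subset_of_nonneg hTS fun i _ _ => sq_nonneg _

lemma sparse_restr {n : ℕ} (x : Fin n → ℝ) {S : Finset (Fin n)} {r : ℕ} (h : S.card ≤ r) :
    Sparse r (restr x S) := ⟨S, h, fun i hi => if_neg hi⟩

lemma l1_restr_le_sqrt_card_mul {n : ℕ} (x : Fin n → ℝ) (S : Finset (Fin n)) :
    l1norm (restr x S) ≤ Real.sqrt S.card * l2norm (restr x S) := by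
  have hCS := Finset.sum_mul_sq_le_sq_mul_sq S (fun i => |x i|) (fun _ => (1 : ℝ))
  simp only [mul_one, one_pow, Finset.sum_const, nsmul_eq_mul, sq_abs] at hCS
  rw [l1norm_restr]
  have h2 : (l2norm (restr x S)) ^ 2 = ∑ i ∈ S, (x i) ^ 2 := by
    rw [l2norm_sq, sum_sq_restr]
  apply le_of_sq_le_sq (mul_nonneg (Real.sqrt_nonneg _) (l2norm_nonneg _))
  · rw [mul_pow, Real.sq_sqrt (Nat.cast_nonneg _), h2]
    calc (∑ i ∈ S, |x i|) ^ 2 ≤ (∑ i ∈ S, (x i)^2) * S.card := hCS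
      _ = (S.card : ℝ) * ∑ i ∈ S, (x i)^2 := by ring
  · exact Finset.sum_nonneg fun _ _ => abs_nonneg _

lemma l2_restr_le_of_bdd {n : ℕ} (x : Fin n → ℝ) {S : Finset (Fin n)} {θ : ℝ} (hθ : 0 ≤ θ)
    (hbd : ∀ i ∈ S, |x i| ≤ θ) {c : ℕ} (hc : S.card ≤ c) :
    l2norm (restr x S) ≤ Real.sqrt c * θ := by
  rw [l2norm]
  calc Real.sqrt (∑ i, (restr x S i) ^ 2) ≤ Real.sqrt ((c : ℝ) * θ ^ 2) := by
        apply Real.sqrt_le_sqrt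
        rw [sum_sq_restr]
        calc ∑ i ∈ S, (x i) ^ 2 ≤ ∑ i ∈ S, θ ^ 2 := by
              refine Finset.sum_le_sum fun i hi => ?_
              have := hbd i hi
              nlinarith [abs_nonneg (x i), sq_abs (x i)]
          _ = (S.card : ℝ) * θ ^ 2 := by rw [Finset.sum_const, nsmul_eq_mul]
          _ ≤ (c : ℝ) * θ ^ 2 := by
              have : (S.card : ℝ) ≤ (c : ℝ) := Nat.cast_le.mpr hc
              nlinarith [sq_nonneg θ]
    _ = Real.sqrt c * θ := by rw [Real.sqrt_mul (Nat.cast_nonneg _), Real.sqrt_sq hθ]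

lemma l2_sq_le_of_bdd {n : ℕ} (x : Fin n → ℝ) (S : Finset (Fin n)) {θ : ℝ}
    (hbd : ∀ i ∈ S, |x i| ≤ θ) :
    (l2norm (restr x S)) ^ 2 ≤ θ * l1norm (restr x S) := by
  rw [l2norm_sq, sum_sq_restr, l1norm_restr, Finset.mul_sum]
  refine Finset.sum_le_sum fun i hi => ?_
  have := hbd i hi
  nlinarith [abs_nonneg (x i), sq_abs (x i)]

lemma exists_top {n : ℕ} (w : Fin n → ℝ) :
    ∀ (c : ℕ) (S : Finset (Fin n)), c ≤ S.card →
      ∃ T, T ⊆ S ∧ T.card = c ∧ ∀ i ∈ T, ∀ j ∈ S \ T, |w j| ≤ |w i| := by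
  intro c
  induction c with
  | zero => exact fun S _ => ⟨∅, Finset.empty_subset _, rfl, by simp⟩
  | succ c ih =>
    intro S hc
    have hne : S.Nonempty := Finset.card_pos.mp (lt_of_lt_of_le (Nat.succ_pos c) hc)
    obtain ⟨i0, hi0S, hi0max⟩ := S.exists_max_image (fun i => |w i|) hne
    obtain ⟨T', hT'sub, hT'card, hT'max⟩ := ih (S.erase i0)
      (by rw [Finset.card_erase_of_mem hi0S]; omega)
    have hi0T' : i0 ∉ T' := fun h => Finset.notMem_erase i0 S (hT'sub h)
    refine ⟨insert i0 T', ?_, ?_, ?_⟩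
    · exact Finset.insert_subset hi0S (hT'sub.trans (Finset.erase_subset _ _))
    · rw [Finset.card_insert_of_notMem hi0T', hT'card]
    · intro i hi j hj
      rcases Finset.mem_insert.mp hi with rfl | hiT'
      · exact hi0max j (Finset.mem_sdiff.mp hj).1
      · refine hT'max i hiT' j ?_
        rw [Finset.mem_sdiff] at hj ⊢
        refine ⟨Finset.mem_erase.mpr ⟨?_, hj.1⟩,
          fun hjT' => hj.2 (Finset.mem_insert_of_mem hjT')⟩
        rintro rfl; exact hj.2 (Finset.mem_insert_self _ _)


lemma keyA {n m : ℕ} (A : Matrix (Fin m) (Fin n) ℝ) (c : ℕ) (hc : 0 < c) (δub : ℝ)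
    (hRIPub : ∀ v : Fin n → ℝ, Sparse c v → l1norm (A.mulVec v) ≤ (1 + δub) * l2norm v)
    (hσ : 0 ≤ 1 + δub) (w : Fin n → ℝ) (S : Finset (Fin n)) :
    ∀ (θ : ℝ), 0 ≤ θ → (∀ i ∈ S, |w i| ≤ θ) →
      l1norm (A.mulVec (restr w S)) ≤
        (1 + δub) * (Real.sqrt c * θ + l1norm (restr w S) / Real.sqrt c) := by
  induction S using Finset.strongInduction with
  | _ S ih =>
    intro θ hθ hbd
    have hc' : (0:ℝ) < (c:ℝ) := by exact_mod_cast hc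
    have hqc : (0:ℝ) < Real.sqrt c := Real.sqrt_pos.mpr hc'
    by_cases hcard : S.card ≤ c
    · refine (hRIPub _ (sparse_restr w hcard)).trans ?_
      have h2 : l2norm (restr w S) ≤ Real.sqrt c * θ := l2_restr_le_of_bdd w hθ hbd hcard
      have h3 : 0 ≤ l1norm (restr w S) / Real.sqrt c :=
        div_nonneg (l1norm_nonneg _) hqc.le
      nlinarith
    · push_neg at hcard
      obtain ⟨B, hBsub, hBcard, hBmax⟩ := exists_top w c S hcard.le
      have hBne : B.Nonempty := Finset.card_pos.mp (hBcard ▸ hc)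
      have hss : S \ B ⊂ S := Finset.sdiff_ssubset hBsub hBne
      set L := l1norm (restr w B) with hL
      have hLnn : 0 ≤ L := l1norm_nonneg _
      have hθ' : ∀ j ∈ S \ B, |w j| ≤ L / c := by
        intro j hj
        rw [le_div_iff₀ hc']
        calc |w j| * c = ∑ _i ∈ B, |w j| := by
              rw [Finset.sum_const, nsmul_eq_mul, hBcard]; ring
          _ ≤ ∑ i ∈ B, |w i| := Finset.sum_le_sum fun i hi => hBmax i hi j hj
          _ = L := (l1norm_restr w B).symm
      have hAsplit : A.mulVec (restr w S)
          = A.mulVec (restr w B) + A.mulVec (restr w (S \ B)) := by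
        rw [restr_add_sdiff w hBsub, Matrix.mulVec_add]
      have h1 : l1norm (A.mulVec (restr w B)) ≤ (1 + δub) * (Real.sqrt c * θ) := by
        refine (hRIPub _ (sparse_restr w hBcard.le)).trans ?_
        exact mul_le_mul_of_nonneg_left
          (l2_restr_le_of_bdd w hθ (fun i hi => hbd i (hBsub hi)) hBcard.le) hσ
      have h2 := ih (S \ B) hss (L / c) (div_nonneg hLnn hc'.le) hθ'
      have hkey : Real.sqrt c * (L / c) = L / Real.sqrt c := by
        have hcc : Real.sqrt c * Real.sqrt c = (c:ℝ) := Real.mul_self_sqrt hc'.le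
        rw [eq_div_iff (ne_of_gt hqc)]
        field_simp
        linear_combination L * hcc
      have hl1 : l1norm (restr w S) = L + l1norm (restr w (S \ B)) :=
        l1norm_restr_add_sdiff w hBsub
      calc l1norm (A.mulVec (restr w S))
          ≤ l1norm (A.mulVec (restr w B)) + l1norm (A.mulVec (restr w (S \ B))) := by
            rw [hAsplit]; exact l1norm_add_le _ _
        _ ≤ (1 + δub) * (Real.sqrt c * θ)
            + (1 + δub) * (Real.sqrt c * (L/c) + l1norm (restr w (S \ B)) / Real.sqrt c) :=
            add_le_add h1 h2
        _ = (1 + δub) * (Real.sqrt c * θ + l1norm (restr w S) / Real.sqrt c) := by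
            rw [hkey, hl1]; field_simp


lemma restr_add_compl {n : ℕ} (x : Fin n → ℝ) (S : Finset (Fin n)) :
    restr x S + restr x Sᶜ = x := by
  funext i
  by_cases h : i ∈ S <;> simp [restr, h]

lemma l1norm_neg {n : ℕ} (x : Fin n → ℝ) : l1norm (-x) = l1norm x := by
  rw [l1norm, l1norm]; exact Finset.sum_congr rfl fun i _ => by simp

lemma l1norm_sub_le {n : ℕ} (x y : Fin n → ℝ) : l1norm (x - y) ≤ l1norm x + l1norm y := by
  rw [sub_eq_add_neg]
  exact (l1norm_add_le x (-y)).trans (by rw [l1norm_neg])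

lemma l1norm_sub_comm {n : ℕ} (x y : Fin n → ℝ) : l1norm (x - y) = l1norm (y - x) := by
  rw [show y - x = -(x - y) by ring, l1norm_neg]

lemma abs_sub_abs_le_abs_add (a b : ℝ) : |a| - |b| ≤ |a + b| := by
  have h := abs_add_le (a + b) (-b)
  simp only [add_neg_cancel_right, abs_neg] at h
  linarith

lemma abs_sub_abs_le_abs_add' (a b : ℝ) : |b| - |a| ≤ |a + b| := by
  have h := abs_add_le (a + b) (-a)
  simp only [abs_neg] at h
  have h2 : a + b + -a = b := by ring
  rw [h2] at h
  linarith

end Stmt7Aux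

open Stmt7Aux

set_option maxHeartbeats 1000000


/-- stable recovery via `ℓ₁ − αℓ₂`-LAD.  Let `0 < α ≤ 1`, `s ∈ [1, n]`,
`k > 0` with `ks ∈ ℤ₊` and `a = a(s,ks;α) = (√(ks) − α)/(√s + α) > 1`.  Let `b = Ax + z`
with `‖z‖₁ ≤ η₁`.  If `A` has (ℓ₂,ℓ₁)-RIP constants satisfying
`δ_{ks}^{ub} + a·δ_{(k+1)s}^{lb} < a − 1` and `x̂` satisfies `‖b − Ax̂‖₁ ≤ η₁` and
`‖x̂‖₁ − α‖x̂‖₂ ≤ ‖x‖₁ − α‖x‖₂`, then with `ρ = 1 − δ_{(k+1)s}^{lb} − (1 + δ_{ks}^{ub})/a`: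
`‖x̂ − x‖₂ ≤ [2(2√k + 1)√s / ((2√(ks) − α)ρ)]·η₁
  + [√s/(2√(ks) − α)]·[(2√k + 1)(1 + δ_{ks}^{ub})√s/(ρ(√(ks) − α)) + 1]·(2‖x₋ₘₐₓ₍ₛ₎‖₁/√s)`. -/
theorem stmt7 {n m : ℕ} (α : ℝ) (hα0 : 0 < α) (hα1 : α ≤ 1)
    (s : ℕ) (hs : 0 < s) (hsn : s ≤ n)
    (k : ℝ) (hk : 0 < k) (ks : ℕ) (hks : 0 < ks) (hksk : (ks : ℝ) = k * s)
    (a : ℝ) (ha_def : a = (Real.sqrt (ks : ℝ) - α) / (Real.sqrt s + α)) (ha : 1 < a)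
    (A : Matrix (Fin m) (Fin n) ℝ) (δlb δub : ℝ) (hδlb : 0 ≤ δlb) (hδub : 0 ≤ δub)
    (hRIPlb : ∀ v : Fin n → ℝ, Sparse (ks + s) v →
      (1 - δlb) * l2norm v ≤ l1norm (A.mulVec v))
    (hRIPub : ∀ v : Fin n → ℝ, Sparse ks v →
      l1norm (A.mulVec v) ≤ (1 + δub) * l2norm v)
    (hcond : δub + a * δlb < a - 1)
    (x : Fin n → ℝ) (z : Fin m → ℝ) (η₁ : ℝ) (hz : l1norm z ≤ η₁)
    (b : Fin m → ℝ) (hb : b = A.mulVec x + z)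
    (xhat : Fin n → ℝ) (hfeas : l1norm (b - A.mulVec xhat) ≤ η₁)
    (hmin : l1norm xhat - α * l2norm xhat ≤ l1norm x - α * l2norm x)
    (Tx : Finset (Fin n)) (hTx : IsMaxIdx x s Tx)
    (ρ : ℝ) (hρ : ρ = 1 - δlb - (1 + δub) / a) :
    l2norm (xhat - x) ≤
      2 * (2 * Real.sqrt k + 1) * Real.sqrt s /
          ((2 * Real.sqrt (ks : ℝ) - α) * ρ) * η₁ +
      Real.sqrt s / (2 * Real.sqrt (ks : ℝ) - α) *
          ((2 * Real.sqrt k + 1) * (1 + δub) * Real.sqrt s /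
              (ρ * (Real.sqrt (ks : ℝ) - α)) + 1) *
          (2 * l1norm (restr x Txᶜ) / Real.sqrt s) := by
  obtain ⟨-, hTxcard, -⟩ := hTx
  set d := xhat - x with hd
  set q := Real.sqrt (ks : ℝ) with hq
  set p := Real.sqrt (s : ℝ) with hp
  have hks' : (0:ℝ) < (ks:ℝ) := by exact_mod_cast hks
  have hs' : (0:ℝ) < (s:ℝ) := by exact_mod_cast hs
  have hqpos : 0 < q := Real.sqrt_pos.mpr hks'
  have hppos : 0 < p := Real.sqrt_pos.mpr hs'
  have hq2 : q * q = (ks:ℝ) := Real.mul_self_sqrt hks'.le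
  have hpα : 0 < p + α := by linarith only [hppos, hα0]
  have hax : a * (p + α) = q - α := by
    rw [ha_def]; field_simp
  have hqα : p + α < q - α := by
    have h := mul_lt_mul_of_pos_right ha hpα
    linarith only [h, hax, hpα]
  have hqα0 : 0 < q - α := lt_trans hpα hqα
  have h2qα : 0 < 2 * q - α := by linarith only [hqpos, hqα, hpα]
  have ha0 : 0 < a := lt_trans one_pos ha
  have hσ : (0:ℝ) ≤ 1 + δub := by linarith only [hδub]
  have hρpos : 0 < ρ := by
    rw [hρ]
    have h1 : (1 + δub) / a < 1 - δlb := by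
      rw [div_lt_iff₀ ha0]; linarith only [hcond]
    linarith only [h1]
  -- construct T₁
  set c' := min ks (Txᶜ.card) with hc'
  obtain ⟨T₁, hT₁sub, hT₁card, hT₁max⟩ := exists_top d c' Txᶜ (min_le_right _ _)
  set U := Tx ∪ T₁ with hU
  have hW : Uᶜ = Txᶜ \ T₁ := by
    rw [hU, Finset.compl_union]
    ext i; simp [Finset.mem_sdiff, and_comm]
  set Λ := l2norm (restr d U) with hΛ
  set u := l1norm (restr d Txᶜ) with hu
  set t := l2norm d with ht
  set e := 2 * l1norm (restr x Txᶜ) with he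
  set β := l2norm (restr d Uᶜ) with hβdef
  have hΛnn : 0 ≤ Λ := l2norm_nonneg _
  have hunn : 0 ≤ u := l1norm_nonneg _
  have htnn : 0 ≤ t := l2norm_nonneg _
  have hβnn : 0 ≤ β := l2norm_nonneg _
  have henn : 0 ≤ e := mul_nonneg (by norm_num) (l1norm_nonneg _)
  set θ := l1norm (restr d T₁) / (ks:ℝ) with hθdef
  have hθnn : 0 ≤ θ := div_nonneg (l1norm_nonneg _) hks'.le
  clear_value q p Λ u t e β θ
  have hl1split : l1norm (restr d T₁) + l1norm (restr d Uᶜ) = u := by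
    rw [hW, hu]
    exact (l1norm_restr_add_sdiff d hT₁sub).symm
  have hbdW : ∀ j ∈ Uᶜ, |d j| ≤ θ := by
    intro j hj
    rw [hW] at hj
    rcases le_or_gt ks (Txᶜ.card) with hle | hlt
    · have hcks : T₁.card = ks := by rw [hT₁card, hc']; omega
      rw [hθdef, le_div_iff₀ hks']
      calc |d j| * ks = ∑ _i ∈ T₁, |d j| := by
            rw [Finset.sum_const, nsmul_eq_mul, hcks]; ring
        _ ≤ ∑ i ∈ T₁, |d i| := Finset.sum_le_sum fun i hi => hT₁max i hi j hj
        _ = l1norm (restr d T₁) := (l1norm_restr d T₁).symm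
    · exfalso
      have hT₁eq : T₁ = Txᶜ := Finset.eq_of_subset_of_card_le hT₁sub
        (by rw [hT₁card, hc']; omega)
      rw [hT₁eq] at hj
      simp at hj
  -- basic vector identities
  have hxhat_eq : ∀ i, xhat i = x i + d i := fun i => by rw [hd]; simp
  -- feasibility chain
  have hAd : l1norm (A.mulVec d) ≤ 2 * η₁ := by
    have hAx : A.mulVec x = b - z := by rw [hb]; abel
    have h1 : A.mulVec d = (A.mulVec xhat - b) + z := by
      rw [hd, Matrix.mulVec_sub, hAx]; abel
    rw [h1]
    have h2 : l1norm (A.mulVec xhat - b) ≤ η₁ := by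
      rw [l1norm_sub_comm]; exact hfeas
    calc l1norm ((A.mulVec xhat - b) + z)
        ≤ l1norm (A.mulVec xhat - b) + l1norm z := l1norm_add_le _ _
      _ ≤ η₁ + η₁ := add_le_add h2 hz
      _ = 2 * η₁ := by ring
  -- RIP lower on U
  have hAU : (1 - δlb) * Λ ≤ l1norm (A.mulVec (restr d U)) := by
    rw [hΛ]
    apply hRIPlb
    apply sparse_restr
    have h1 : U.card ≤ Tx.card + T₁.card := Finset.card_union_le _ _
    have h2 : c' ≤ ks := min_le_left _ _
    rw [hTxcard, hT₁card] at h1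
    omega
  -- keyA on W
  have hAW : l1norm (A.mulVec (restr d Uᶜ)) ≤ (1 + δub) * (u / q) := by
    have h := keyA A ks hks δub hRIPub hσ d Uᶜ θ hθnn hbdW
    have hqθ : q * θ = l1norm (restr d T₁) / q := by
      rw [hθdef, eq_div_iff (ne_of_gt hqpos)]
      field_simp
      linear_combination l1norm (restr d T₁) * hq2
    have heq : q * θ + l1norm (restr d Uᶜ) / q = u / q := by
      rw [hqθ, ← add_div, hl1split]
    rw [← hq] at h
    rw [heq] at h
    exact h
  -- inequality (I)
  have hI : (1 - δlb) * Λ ≤ 2 * η₁ + (1 + δub) * (u / q) := by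
    have hAUeq : A.mulVec (restr d U) = A.mulVec d - A.mulVec (restr d Uᶜ) := by
      conv_lhs => rw [show restr d U = d - restr d Uᶜ by
        rw [eq_sub_iff_add_eq]; exact restr_add_compl d U]
      rw [Matrix.mulVec_sub]
    have h1 : l1norm (A.mulVec (restr d U))
        ≤ l1norm (A.mulVec d) + l1norm (A.mulVec (restr d Uᶜ)) := by
      rw [hAUeq]; exact l1norm_sub_le _ _
    linarith
  -- cone inequality (II)
  have hl2xhat : l2norm xhat ≤ l2norm x + t := by
    have hxx : xhat = x + d := funext fun i => hxhat_eq i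
    rw [ht, hxx]
    exact l2norm_add_le x d
  have hl1xhat : l1norm xhat ≤ l1norm x + α * t := by
    have h1 : α * l2norm xhat ≤ α * (l2norm x + t) :=
      mul_le_mul_of_nonneg_left hl2xhat hα0.le
    linarith only [hmin, h1]
  have hlow1 : ∑ i ∈ Tx, |x i| - ∑ i ∈ Tx, |d i|
      + (∑ i ∈ Txᶜ, |d i| - ∑ i ∈ Txᶜ, |x i|) ≤ l1norm xhat := by
    have hsplit : l1norm xhat = ∑ i ∈ Tx, |xhat i| + ∑ i ∈ Txᶜ, |xhat i| :=
      (Finset.sum_add_sum_compl Tx _).symm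
    have h1 : ∑ i ∈ Tx, (|x i| - |d i|) ≤ ∑ i ∈ Tx, |xhat i| :=
      Finset.sum_le_sum fun i _ => by
        rw [hxhat_eq i]; exact Stmt7Aux.abs_sub_abs_le_abs_add (x i) (d i)
    have h2 : ∑ i ∈ Txᶜ, (|d i| - |x i|) ≤ ∑ i ∈ Txᶜ, |xhat i| :=
      Finset.sum_le_sum fun i _ => by
        rw [hxhat_eq i]; exact abs_sub_abs_le_abs_add' (x i) (d i)
    rw [Finset.sum_sub_distrib] at h1 h2
    linarith
  have hTd : l1norm (restr d Tx) ≤ p * Λ := by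
    calc l1norm (restr d Tx) ≤ Real.sqrt Tx.card * l2norm (restr d Tx) :=
          l1_restr_le_sqrt_card_mul d Tx
      _ = p * l2norm (restr d Tx) := by rw [hTxcard, hp]
      _ ≤ p * Λ := by
          rw [hΛ, hU]
          exact mul_le_mul_of_nonneg_left
            (l2norm_restr_mono d Finset.subset_union_left) hppos.le
  have hII : u ≤ p * Λ + α * t + e := by
    have hx_split : l1norm x = ∑ i ∈ Tx, |x i| + ∑ i ∈ Txᶜ, |x i| :=
      (Finset.sum_add_sum_compl Tx _).symm
    have hu_eq : u = ∑ i ∈ Txᶜ, |d i| := by rw [hu, l1norm_restr]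
    have hdTx_eq : l1norm (restr d Tx) = ∑ i ∈ Tx, |d i| := l1norm_restr d Tx
    have he_eq : e = 2 * ∑ i ∈ Txᶜ, |x i| := by rw [he, l1norm_restr]
    linarith only [hlow1, hl1xhat, hTd, hx_split, hu_eq, hdTx_eq, he_eq]
  -- tail bounds
  have htsq : t ^ 2 = Λ ^ 2 + β ^ 2 := by
    rw [ht, hΛ, hβdef, l2norm_sq, l2norm_sq, l2norm_sq, sum_sq_restr, sum_sq_restr]
    exact (Finset.sum_add_sum_compl U _).symm
  have htΛβ : t ≤ Λ + β := by
    apply le_of_sq_le_sq (add_nonneg hΛnn hβnn) _ htnn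
    rw [htsq]; linarith only [mul_nonneg hΛnn hβnn]
  have hβu : 2 * q * β ≤ u := by
    have h1 : β ^ 2 ≤ θ * l1norm (restr d Uᶜ) := by
      rw [hβdef]; exact l2_sq_le_of_bdd d Uᶜ hbdW
    have hT1nn := l1norm_nonneg (restr d T₁)
    have hWnn := l1norm_nonneg (restr d Uᶜ)
    have hθW : (ks:ℝ) * (θ * l1norm (restr d Uᶜ))
        = l1norm (restr d T₁) * l1norm (restr d Uᶜ) := by
      rw [hθdef]; field_simp
    have h1' : (ks:ℝ) * β ^ 2 ≤ l1norm (restr d T₁) * l1norm (restr d Uᶜ) := by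
      rw [← hθW]; exact mul_le_mul_of_nonneg_left h1 hks'.le
    apply le_of_sq_le_sq hunn _ (mul_nonneg (by linarith only [hqpos] : (0:ℝ) ≤ 2 * q) hβnn)
    calc (2 * q * β) ^ 2 = 4 * ((q * q) * β ^ 2) := by ring
      _ = 4 * ((ks:ℝ) * β ^ 2) := by rw [hq2]
      _ ≤ 4 * (l1norm (restr d T₁) * l1norm (restr d Uᶜ)) := by linarith only [h1']
      _ ≤ u ^ 2 := by
          have hsq := congrArg (fun r : ℝ => r ^ 2) hl1split
          linarith only [hsq, sq_nonneg (l1norm (restr d T₁) - l1norm (restr d Uᶜ))]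
  -- combine: u * (2q - α) ≤ 2q((p+α)Λ + e)
  have hu2q : u * (2 * q - α) ≤ 2 * q * ((p + α) * Λ + e) := by
    have h2q : (0:ℝ) ≤ 2 * q := by linarith only [hqpos]
    linarith only [mul_le_mul_of_nonneg_left hII h2q,
      mul_le_mul_of_nonneg_left htΛβ (mul_nonneg h2q hα0.le),
      mul_le_mul_of_nonneg_left hβu hα0.le]
  have huq : u * (q - α) ≤ q * ((p + α) * Λ + e) := by
    linarith only [hu2q, mul_nonneg hunn hα0.le]
  -- inequality (A2): t(2q - α) ≤ (2q + p)Λ + e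
  have hIII : t * (2 * q - α) ≤ (2 * q + p) * Λ + e := by
    have h2q : (0:ℝ) ≤ 2 * q := by linarith only [hqpos]
    linarith only [mul_le_mul_of_nonneg_left htΛβ h2q, hβu, hII]
  -- inequality (A1): ρ(q-α)Λ ≤ 2η₁(q-α) + (1+δub)e
  have hIq : (1 - δlb) * Λ * q ≤ 2 * η₁ * q + (1 + δub) * u := by
    have h := mul_le_mul_of_nonneg_right hI hqpos.le
    have heq2 : (2 * η₁ + (1 + δub) * (u / q)) * q = 2 * η₁ * q + (1 + δub) * u := by
      field_simp
    linarith only [h, heq2]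
  have hA1 : ρ * (q - α) * Λ ≤ 2 * η₁ * (q - α) + (1 + δub) * e := by
    have hX : ((1 - δlb) * Λ * (q - α)) * q
        ≤ (2 * η₁ * (q - α) + (1 + δub) * ((p + α) * Λ + e)) * q := by
      linarith only [mul_le_mul_of_nonneg_right hIq hqα0.le,
        mul_le_mul_of_nonneg_left huq hσ]
    have hIV' := (mul_le_mul_iff_of_pos_right hqpos).mp hX
    have hρΛ : ρ * (q - α) * Λ = (1 - δlb) * (q - α) * Λ - (1 + δub) * (p + α) * Λ := by
      have hρq : ρ * (q - α) = (1 - δlb) * (q - α) - (1 + δub) * (p + α) := by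
        rw [hρ, ← hax]
        field_simp
      linear_combination Λ * hρq
    linarith only [hIV', hρΛ]
  -- final combination
  have hkp : Real.sqrt k * p = q := by
    rw [hp, hq, hksk, Real.sqrt_mul hk.le]
  have hfinal : t ≤ ((2 * q + p) * (2 * η₁ * (q - α) + (1 + δub) * e)
      + e * (ρ * (q - α))) / ((2 * q - α) * (ρ * (q - α))) := by
    rw [le_div_iff₀ (mul_pos h2qα (mul_pos hρpos hqα0))]
    have h2qp : (0:ℝ) ≤ 2 * q + p := by linarith only [hqpos, hppos]
    linarith only [mul_le_mul_of_nonneg_right hIII (mul_nonneg hρpos.le hqα0.le),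
      mul_le_mul_of_nonneg_left hA1 h2qp]
  refine hfinal.trans (le_of_eq ?_)
  rw [← hkp]
  have hne1 : 2 * (Real.sqrt k * p) - α ≠ 0 := by rw [hkp]; exact ne_of_gt h2qα
  have hne2 : Real.sqrt k * p - α ≠ 0 := by rw [hkp]; exact ne_of_gt hqα0
  field_simp
  ring
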